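/- Let X = {a,b} and let g_1, g_2 : X* → X* be morphisms with g_1(a) = g_2(a) = a. Suppose there exist positive integers m and n and nonnegative integers γ_1, γ_2, δ_1, δ_2 with γ_1 + γ_2 = δ_1 + δ_2, and a word z of the form z = b a^{α_1} b a^{α_2} b ⋯ b a^{α_{p-1}} b (with p ≥ 1 and nonnegative integers α_i), such that g_1^n(b) = a^{γ_1} z a^{γ_2} and g_2^m(b) = a^{δ_1} z a^{δ_2}. Then g_1^n and g_2^m commute. -/

import Mathlib

/-- Words over the binary alphabet: `false` is the letter `a`, `true` is the letter `b`. -/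
abbrev Word := List Bool

/-- The morphism of the free monoid determined by the images `g` of the letters. -/
def applyG (g : Bool → Word) (w : Word) : Word := w.flatMap g

/-- `a^n`. -/
def rep (n : ℕ) : Word := List.replicate n false

/-- `b a^{α 1} b a^{α 2} ⋯ b a^{α (p-1)} b`, a word with `p` occurrences of `b`. -/
def blockWord (p : ℕ) (α : ℕ → ℕ) : Word :=
  ((List.range (p - 1)).flatMap fun i => true :: rep (α (i + 1))) ++ [true]

/-- `w^k`. -/
def wordPow (w : Word) (k : ℕ) : Word := (List.replicate k w).flatten

/-- `u` and `v` are `a`-conjugates. -/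
def AConj (u v : Word) : Prop :=
  ∃ p q r s : ℕ, ∃ w : Word,
    u = rep p ++ w ++ rep q ∧ v = rep r ++ w ++ rep s ∧ p + q = r + s

/-- `w` is the infinite word `ω(g)`: for every `n`, the word obtained from `g^n(b)` by deleting
all occurrences of `a` preceding the first occurrence of `b` is a prefix of `w`. -/
def IsOmega (g : Bool → Word) (w : ℕ → Bool) : Prop :=
  ∀ n k : ℕ, ∀ hk : k < (((applyG g)^[n] [true]).dropWhile (fun x => !x)).length,
    (((applyG g)^[n] [true]).dropWhile (fun x => !x)).get ⟨k, hk⟩ = w k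

/-- `Aw w i` (for `i ≥ 1`): the number of occurrences of `a` in `w` strictly between the
`i`-th and `(i+1)`-th occurrences of `b` in `w`. -/
noncomputable def Aw (w : ℕ → Bool) (i : ℕ) : ℕ :=
  Nat.nth (fun n => w n = true) i - Nat.nth (fun n => w n = true) (i - 1) - 1

lemma rep_add (i j : ℕ) : rep i ++ rep j = rep (i + j) := by
  simp [rep, ← List.replicate_add]

lemma rep_comm (i j : ℕ) : rep i ++ rep j = rep j ++ rep i := by
  rw [rep_add, rep_add, Nat.add_comm]

lemma applyG_append (g : Bool → Word) (u v : Word) :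
    applyG g (u ++ v) = applyG g u ++ applyG g v := by
  simp [applyG]

lemma applyG_rep (g : Bool → Word) (h : g false = [false]) (k : ℕ) :
    applyG g (rep k) = rep k := by
  induction k with
  | zero => rfl
  | succ k ih =>
    rw [rep, List.replicate_succ, ← rep]
    simp [applyG, h] at ih ⊢
    exact ih

lemma iterate_applyG (g : Bool → Word) (n : ℕ) (w : Word) :
    (applyG g)^[n] w = applyG (fun x => (applyG g)^[n] [x]) w := by
  induction n generalizing w with
  | zero => simp [applyG]
  | succ n ih =>
    rw [Function.iterate_succ_apply, ih]
    show (applyG g w).flatMap _ = w.flatMap _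
    rw [show applyG g w = w.flatMap g from rfl, List.flatMap_assoc]
    congr 1; funext x
    rw [Function.iterate_succ_apply]
    have h1 : applyG g [x] = g x := by simp [applyG]
    rw [h1, ih (g x)]
    rfl

def subst (c d : ℕ) (z : Word) : Bool → Word :=
  fun b => if b then rep c ++ (z ++ rep d) else [false]

lemma key (z : Word) (γ₁ γ₂ δ₁ δ₂ : ℕ) (hs : γ₁ + γ₂ = δ₁ + δ₂) (w : Word) :
    rep γ₂ ++ (applyG (subst γ₁ γ₂ z) w ++ rep δ₂)
    = rep δ₂ ++ (applyG (subst δ₁ δ₂ z) w ++ rep γ₂) := by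
  induction w with
  | nil => simp [applyG, rep_comm]
  | cons x w ih =>
    cases x with
    | false =>
      show rep γ₂ ++ (([false] ++ applyG (subst γ₁ γ₂ z) w) ++ rep δ₂) = _
      rw [show ([false] : Word) = rep 1 from rfl]
      calc rep γ₂ ++ ((rep 1 ++ applyG (subst γ₁ γ₂ z) w) ++ rep δ₂)
          = (rep γ₂ ++ rep 1) ++ (applyG (subst γ₁ γ₂ z) w ++ rep δ₂) := by
            simp [List.append_assoc]
        _ = rep 1 ++ (rep γ₂ ++ (applyG (subst γ₁ γ₂ z) w ++ rep δ₂)) := by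
            rw [rep_comm γ₂ 1, List.append_assoc]
        _ = rep 1 ++ (rep δ₂ ++ (applyG (subst δ₁ δ₂ z) w ++ rep γ₂)) := by rw [ih]
        _ = (rep δ₂ ++ rep 1) ++ (applyG (subst δ₁ δ₂ z) w ++ rep γ₂) := by
            rw [rep_comm δ₂ 1, List.append_assoc]
        _ = rep δ₂ ++ ((rep 1 ++ applyG (subst δ₁ δ₂ z) w) ++ rep γ₂) := by
            simp [List.append_assoc]
    | true =>
      show rep γ₂ ++ (((rep γ₁ ++ (z ++ rep γ₂)) ++ applyG (subst γ₁ γ₂ z) w) ++ rep δ₂) = _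
      calc rep γ₂ ++ (((rep γ₁ ++ (z ++ rep γ₂)) ++ applyG (subst γ₁ γ₂ z) w) ++ rep δ₂)
          = (rep γ₂ ++ rep γ₁) ++ (z ++ (rep γ₂ ++ (applyG (subst γ₁ γ₂ z) w ++ rep δ₂))) := by
            simp [List.append_assoc]
        _ = (rep δ₂ ++ rep δ₁) ++ (z ++ (rep δ₂ ++ (applyG (subst δ₁ δ₂ z) w ++ rep γ₂))) := by
            rw [ih, rep_add, rep_add, Nat.add_comm γ₂, Nat.add_comm δ₂, hs]
        _ = rep δ₂ ++ (((rep δ₁ ++ (z ++ rep δ₂)) ++ applyG (subst δ₁ δ₂ z) w) ++ rep γ₂) := by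
            simp [List.append_assoc]


lemma iterate_false (g : Bool → Word) (h : g false = [false]) (k : ℕ) :
    (applyG g)^[k] [false] = [false] := by
  induction k with
  | zero => rfl
  | succ k ih =>
    rw [Function.iterate_succ_apply, show applyG g [false] = g false by simp [applyG], h, ih]

lemma blockWord_head (p : ℕ) (α : ℕ → ℕ) : ∃ z', blockWord p α = true :: z' := by
  unfold blockWord
  cases h : p - 1 with
  | zero => exact ⟨[], rfl⟩
  | succ k =>
    rw [List.range_succ_eq_map, List.flatMap_cons]
    exact ⟨_, rfl⟩

lemma key2 (z' : Word) (γ₁ γ₂ δ₁ δ₂ : ℕ) (hs : γ₁ + γ₂ = δ₁ + δ₂) :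
    rep δ₁ ++ (applyG (subst γ₁ γ₂ (true :: z')) (true :: z') ++ rep δ₂)
    = rep γ₁ ++ (applyG (subst δ₁ δ₂ (true :: z')) (true :: z') ++ rep γ₂) := by
  set z := true :: z' with hz
  calc rep δ₁ ++ (applyG (subst γ₁ γ₂ z) z ++ rep δ₂)
      = rep δ₁ ++ (((rep γ₁ ++ (z ++ rep γ₂)) ++ applyG (subst γ₁ γ₂ z) z') ++ rep δ₂) := by
        rw [hz]; rfl
    _ = (rep δ₁ ++ rep γ₁) ++ (z ++ (rep γ₂ ++ (applyG (subst γ₁ γ₂ z) z' ++ rep δ₂))) := by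
        simp [List.append_assoc]
    _ = (rep γ₁ ++ rep δ₁) ++ (z ++ (rep δ₂ ++ (applyG (subst δ₁ δ₂ z) z' ++ rep γ₂))) := by
        rw [rep_comm δ₁ γ₁, key z γ₁ γ₂ δ₁ δ₂ hs z']
    _ = rep γ₁ ++ (((rep δ₁ ++ (z ++ rep δ₂)) ++ applyG (subst δ₁ δ₂ z) z') ++ rep γ₂) := by
        simp [List.append_assoc]
    _ = rep γ₁ ++ (applyG (subst δ₁ δ₂ z) z ++ rep γ₂) := by rw [hz]; rfl

lemma iter_eq_subst (g : Bool → Word) (ha : g false = [false]) (n : ℕ) (c d : ℕ) (z : Word)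
    (hb : (applyG g)^[n] [true] = rep c ++ z ++ rep d) :
    (applyG g)^[n] = applyG (subst c d z) := by
  funext w
  rw [iterate_applyG]
  congr 1
  funext x
  cases x with
  | false => rw [iterate_false g ha]; rfl
  | true => rw [hb]; simp [subst, List.append_assoc]


/-- if `g₁(a)=g₂(a)=a` and `g₁^n(b) = a^{γ₁} z a^{γ₂}`, `g₂^m(b) = a^{δ₁} z a^{δ₂}`
with `γ₁+γ₂ = δ₁+δ₂` and `z = b a^{α₁} b ⋯ b a^{α_{p-1}} b`, then `g₁^n` and `g₂^m` commute. -/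
theorem stmt3 (g₁ g₂ : Bool → Word)
    (h₁a : g₁ false = [false]) (h₂a : g₂ false = [false])
    (m n : ℕ) (hm : 0 < m) (hn : 0 < n)
    (p : ℕ) (hp : 1 ≤ p) (α : ℕ → ℕ) (γ₁ γ₂ δ₁ δ₂ : ℕ)
    (hsum : γ₁ + γ₂ = δ₁ + δ₂)
    (h₁b : (applyG g₁)^[n] [true] = rep γ₁ ++ blockWord p α ++ rep γ₂)
    (h₂b : (applyG g₂)^[m] [true] = rep δ₁ ++ blockWord p α ++ rep δ₂) :
    (applyG g₁)^[n] ∘ (applyG g₂)^[m] = (applyG g₂)^[m] ∘ (applyG g₁)^[n] := by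

  obtain ⟨z', hz⟩ := blockWord_head p α
  rw [iter_eq_subst g₁ h₁a n γ₁ γ₂ _ h₁b, iter_eq_subst g₂ h₂a m δ₁ δ₂ _ h₂b, hz]
  funext w
  show applyG _ (applyG _ w) = applyG _ (applyG _ w)
  simp only [applyG, List.flatMap_assoc]
  congr 1
  funext x
  cases x with
  | false =>
    show List.flatMap _ (subst δ₁ δ₂ _ false) = List.flatMap _ (subst γ₁ γ₂ _ false)
    simp [subst]
  | true =>
    show List.flatMap _ (subst δ₁ δ₂ _ true) = List.flatMap _ (subst γ₁ γ₂ _ true)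
    have e1 : subst δ₁ δ₂ (true :: z') true = rep δ₁ ++ ((true :: z') ++ rep δ₂) := by
      simp [subst]
    have e2 : subst γ₁ γ₂ (true :: z') true = rep γ₁ ++ ((true :: z') ++ rep γ₂) := by
      simp [subst]
    rw [e1, e2]
    show applyG _ _ = applyG _ _
    rw [applyG_append, applyG_append, applyG_append, applyG_append,
        applyG_rep _ (by simp [subst]), applyG_rep _ (by simp [subst]),
        applyG_rep _ (by simp [subst]), applyG_rep _ (by simp [subst])]
    exact key2 z' γ₁ γ₂ δ₁ δ₂ hsum
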